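/- Let N ≥ 1 be an integer, let p satisfy 1 + 8/N < p, and additionally p < 1 + 8/(N-4) when N ≥ 5, and set s_c = N/2 - 4/(p-1). Let Q : ℝ^N → ℝ be a nonzero Schwartz function solving Δ²Q + (2 - s_c)Q - |Q|^{p-1}Q = 0. Define C_GN := (4(p+1)/(N(p-1))) ‖Q‖_2^{-(p+1-N(p-1)/4)} ‖ΔQ‖_2^{-(N(p-1)/4 - 2)}, the function f(x) := x²/2 - (C_GN/(p+1)) x^{N(p-1)/4} for x ≥ 0, and x₁ := ‖Q‖_2^{(2-s_c)/s_c} ‖ΔQ‖_2. Then f'(x₁) = 0 and f(x₁) = M(Q)^{(2-s_c)/s_c} E(Q) = ((N(p-1)-8)/(2N(p-1))) x₁². -/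

import Mathlib

open MeasureTheory

noncomputable section

/-- The Laplacian `Δu = ∑ j ∂²u/∂x_j²` of a function on `ℝ^N`. -/
def laplacian {N : ℕ} {F : Type*} [NormedAddCommGroup F] [NormedSpace ℝ F]
    (u : EuclideanSpace ℝ (Fin N) → F) (x : EuclideanSpace ℝ (Fin N)) : F :=
  ∑ j : Fin N,
    fderiv ℝ (fun y => fderiv ℝ u y (EuclideanSpace.single j 1)) x (EuclideanSpace.single j 1)

open SchwartzMap

namespace PSAux

variable {N : ℕ}

local notation "𝔼" => EuclideanSpace ℝ (Fin N)

def ee (N : ℕ) (j : Fin N) : EuclideanSpace ℝ (Fin N) := EuclideanSpace.single j 1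

/-- partial derivative in direction `j` as a map of Schwartz functions -/
def d1 (j : Fin N) : 𝓢(𝔼, ℝ) →L[ℝ] 𝓢(𝔼, ℝ) := LineDeriv.lineDerivOpCLM ℝ 𝓢(𝔼, ℝ) (ee N j)

lemma d1_apply (j : Fin N) (f : 𝓢(𝔼, ℝ)) (x : 𝔼) :
    d1 j f x = fderiv ℝ f x (ee N j) := rfl

lemma d1_coe (j : Fin N) (f : 𝓢(𝔼, ℝ)) :
    ⇑(d1 j f) = fun y => fderiv ℝ f y (ee N j) := rfl

/-- the Laplacian as a map of Schwartz functions -/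
def Del (f : 𝓢(𝔼, ℝ)) : 𝓢(𝔼, ℝ) := ∑ j, d1 j (d1 j f)

lemma Del_apply (f : 𝓢(𝔼, ℝ)) (x : 𝔼) : Del f x = ∑ j, d1 j (d1 j f) x := by
  rw [Del, ← coe_coeHom, map_sum]
  simp [coeHom]

lemma lap_eq (f : 𝓢(𝔼, ℝ)) : laplacian ⇑f = ⇑(Del f) := by
  funext x
  rw [Del_apply, laplacian]
  rfl

/-- multiplication by the `k`-th coordinate -/
def mulx (k : Fin N) : 𝓢(𝔼, ℝ) →L[ℝ] 𝓢(𝔼, ℝ) :=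
  SchwartzMap.bilinLeftCLM (ContinuousLinearMap.mul ℝ ℝ)
    (EuclideanSpace.proj (𝕜 := ℝ) k).hasTemperateGrowth

lemma mulx_apply (k : Fin N) (f : 𝓢(𝔼, ℝ)) (x : 𝔼) : mulx k f x = f x * x k := rfl

lemma abs_coord_le (x : 𝔼) (k : Fin N) : |x k| ≤ ‖x‖ := by
  rw [EuclideanSpace.norm_eq, ← Real.sqrt_sq_eq_abs]
  apply Real.sqrt_le_sqrt
  calc x k ^ 2 = ‖x k‖ ^ 2 := by rw [Real.norm_eq_abs, sq_abs]
  _ ≤ ∑ i, ‖x i‖ ^ 2 :=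
    Finset.single_le_sum (fun i _ => sq_nonneg ‖x i‖) (Finset.mem_univ k)

/-- bound on Schwartz fn sup norm -/
def supB (f : 𝓢(𝔼, ℝ)) : ℝ := (SchwartzMap.seminorm ℝ 0 0) f
lemma le_supB (f : 𝓢(𝔼, ℝ)) (x : 𝔼) : |f x| ≤ supB f := f.norm_le_seminorm ℝ x
lemma supB_nonneg (f : 𝓢(𝔼, ℝ)) : 0 ≤ supB f := apply_nonneg _ _

lemma integrable_dom (a : 𝓢(𝔼, ℝ)) (k : ℕ) {h : 𝔼 → ℝ} (hc : Continuous h) (C : ℝ)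
    (hb : ∀ x, |h x| ≤ C * (‖x‖ ^ k * ‖a x‖)) : Integrable h := by
  refine ((a.integrable_pow_mul volume k).const_mul C).mono' hc.aestronglyMeasurable ?_
  filter_upwards with x
  simpa using hb x

lemma int_mul (a b : 𝓢(𝔼, ℝ)) : Integrable (fun x => a x * b x) := by
  refine integrable_dom a 0 (a.continuous.mul b.continuous) (supB b) (fun x => ?_)
  rw [abs_mul, pow_zero, one_mul, Real.norm_eq_abs]
  calc |a x| * |b x| ≤ |a x| * supB b := by
        exact mul_le_mul_of_nonneg_left (le_supB b x) (abs_nonneg _)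
  _ = supB b * |a x| := mul_comm _ _

lemma int_mul3 (k : Fin N) (a b : 𝓢(𝔼, ℝ)) : Integrable (fun x => x k * (a x * b x)) := by
  refine integrable_dom a 1 (?_) (supB b) (fun x => ?_)
  · exact ((EuclideanSpace.proj (𝕜 := ℝ) k).continuous.mul
      (a.continuous.mul b.continuous) : )
  · rw [abs_mul, abs_mul, pow_one, Real.norm_eq_abs]
    have h1 : |x k| * (|a x| * |b x|) ≤ ‖x‖ * (|a x| * supB b) := by
      apply mul_le_mul (abs_coord_le x k)
        (mul_le_mul_of_nonneg_left (le_supB b x) (abs_nonneg _))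
        (by positivity) (norm_nonneg _)
    calc |x k| * (|a x| * |b x|) ≤ ‖x‖ * (|a x| * supB b) := h1
    _ = supB b * (‖x‖ * |a x|) := by ring

lemma ibp_gen {u v : 𝔼 → ℝ} (j : Fin N) (hu : Differentiable ℝ u) (hv : Differentiable ℝ v)
    (h1 : Integrable (fun x => fderiv ℝ u x (ee N j) * v x))
    (h2 : Integrable (fun x => u x * fderiv ℝ v x (ee N j)))
    (h3 : Integrable (fun x => u x * v x)) :
    ∫ x, fderiv ℝ u x (ee N j) * v x = -∫ x, u x * fderiv ℝ v x (ee N j) := by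
  have := integral_mul_fderiv_eq_neg_fderiv_mul_of_integrable h1 h2 h3 (fun x _ => hu x) (fun x _ => hv x)
  linarith

lemma ibp (j : Fin N) (a b : 𝓢(𝔼, ℝ)) :
    ∫ x, d1 j a x * b x = -∫ x, a x * d1 j b x := by
  exact ibp_gen j a.differentiable b.differentiable (int_mul (d1 j a) b)
    (int_mul a (d1 j b)) (int_mul a b)

lemma proj_apply' (k : Fin N) (x : 𝔼) : (EuclideanSpace.proj (𝕜 := ℝ) k) x = x k := rfl

lemma proj_ee (k j : Fin N) : (ee N j) k = if j = k then (1:ℝ) else 0 := by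
  simp [ee, EuclideanSpace.single_apply, eq_comm]

lemma ibp_x {g : 𝔼 → ℝ} (k : Fin N) (hg : Differentiable ℝ g)
    (h1 : Integrable g) (h2 : Integrable (fun x => x k * g x))
    (h3 : Integrable (fun x => x k * fderiv ℝ g x (ee N k))) :
    ∫ x, x k * fderiv ℝ g x (ee N k) = -∫ x, g x := by
  have hpd : Differentiable ℝ (fun x : 𝔼 => x k) :=
    (EuclideanSpace.proj (𝕜 := ℝ) k).differentiable
  have hfd : ∀ x : 𝔼, fderiv ℝ (fun x : 𝔼 => x k) x (ee N k) = 1 := by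
    intro x
    have : fderiv ℝ (fun x : 𝔼 => x k) x = EuclideanSpace.proj (𝕜 := ℝ) k :=
      (EuclideanSpace.proj (𝕜 := ℝ) k).fderiv
    rw [this, proj_apply', proj_ee, if_pos rfl]
  have h1' : Integrable (fun x : 𝔼 => fderiv ℝ (fun x : 𝔼 => x k) x (ee N k) * g x) := by
    refine h1.congr ?_
    filter_upwards with x
    rw [hfd x, one_mul]
  have := integral_mul_fderiv_eq_neg_fderiv_mul_of_integrable (f := fun x : 𝔼 => x k)
    (g := g) (v := ee N k) h1' h3 h2 (fun x _ => hpd x) (fun x _ => hg x)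
  rw [this, neg_inj]
  apply integral_congr_ae
  filter_upwards with x
  rw [hfd x, one_mul]

lemma d1_comm (j k : Fin N) (f : 𝓢(𝔼, ℝ)) (x : 𝔼) :
    d1 j (d1 k f) x = d1 k (d1 j f) x := by
  have hsmooth := f.smooth 2
  have hfd : Differentiable ℝ (fderiv ℝ ⇑f) :=
    (hsmooth.fderiv_right (m := 1) (by norm_num)).differentiable (by norm_num)
  have key : ∀ v w : 𝔼, fderiv ℝ (fun y => fderiv ℝ f y v) x w
      = fderiv ℝ (fderiv ℝ ⇑f) x w v := by
    intro v w
    have := fderiv_clm_apply (hfd.differentiableAt (x := x))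
      (differentiableAt_const (𝕜 := ℝ) (c := v))
    rw [show (fun y => fderiv ℝ f y v) = (fun y => (fderiv ℝ ⇑f y) ((fun _ : 𝔼 => v) y)) from rfl,
      this]
    simp
  have hsymm : IsSymmSndFDerivAt ℝ ⇑f x := by
    apply ContDiffAt.isSymmSndFDerivAt (n := 2) hsmooth.contDiffAt (by norm_num)
  show fderiv ℝ (fun y => fderiv ℝ f y (ee N k)) x (ee N j)
      = fderiv ℝ (fun y => fderiv ℝ f y (ee N j)) x (ee N k)
  rw [key, key, hsymm.eq]

-- fragment to append

lemma integral_fun_congr {f g : 𝔼 → ℝ} (h : ∀ x, f x = g x) :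
    ∫ x, f x = ∫ x, g x := by
  congr 1
  funext x
  exact h x

lemma fderiv_mul_apply (a b : 𝓢(𝔼, ℝ)) (x : 𝔼) (j : Fin N) :
    fderiv ℝ (fun y => a y * b y) x (ee N j) = d1 j a x * b x + a x * d1 j b x := by
  rw [fderiv_fun_mul a.differentiable.differentiableAt b.differentiable.differentiableAt]
  simp [d1_apply]
  ring


lemma d1_mulx (j k : Fin N) (c : 𝓢(𝔼, ℝ)) (x : 𝔼) :
    d1 j (mulx k c) x = (ee N j) k * c x + x k * d1 j c x := by
  have hcoe : ⇑(mulx k c) = fun y : 𝔼 => c y * y k := rfl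
  have hpd : DifferentiableAt ℝ (fun y : 𝔼 => y k) x :=
    ((EuclideanSpace.proj (𝕜 := ℝ) k).differentiable).differentiableAt
  have hproj : fderiv ℝ (fun y : 𝔼 => y k) x = EuclideanSpace.proj (𝕜 := ℝ) k :=
    (EuclideanSpace.proj (𝕜 := ℝ) k).fderiv
  rw [d1_apply, hcoe, fderiv_fun_mul c.differentiable.differentiableAt hpd]
  simp only [ContinuousLinearMap.add_apply, ContinuousLinearMap.coe_smul', Pi.smul_apply,
    smul_eq_mul, hproj]
  rw [d1_apply]
  have : (EuclideanSpace.proj (𝕜 := ℝ) k) (ee N j) = (ee N j) k := rfl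
  rw [this]
  ring

lemma ibp_x_mul (k : Fin N) (a b : 𝓢(𝔼, ℝ)) :
    ∫ x, x k * (d1 k a x * b x + a x * d1 k b x) = -∫ x, a x * b x := by
  have h3 : Integrable (fun x : 𝔼 => x k * fderiv ℝ (fun y => a y * b y) x (ee N k)) := by
    refine ((int_mul3 k (d1 k a) b).add (int_mul3 k a (d1 k b))).congr ?_
    filter_upwards with x
    simp only [Pi.add_apply]
    rw [fderiv_mul_apply]
    ring
  have := ibp_x (g := fun y => a y * b y) k (a.differentiable.mul b.differentiable) (int_mul a b) (int_mul3 k a b) h3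
  rw [← this]
  congr 1
  funext x
  rw [fderiv_mul_apply]

lemma ibp_x_mul' (k : Fin N) (a : 𝓢(𝔼, ℝ)) :
    (2:ℝ) * ∫ x, x k * (a x * d1 k a x) = -∫ x, a x * a x := by
  have := ibp_x_mul k a a
  rw [← this, ← integral_const_mul]
  congr 1
  funext x
  ring

lemma cross (Q : 𝓢(𝔼, ℝ)) :
    ∑ j, ∫ x, d1 j (Del Q) x * d1 j Q x = -∫ x, Del Q x * Del Q x := by
  have h : ∀ j : Fin N, ∫ x, d1 j (Del Q) x * d1 j Q x = -∫ x, Del Q x * d1 j (d1 j Q) x :=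
    fun j => ibp j (Del Q) (d1 j Q)
  calc ∑ j, ∫ x, d1 j (Del Q) x * d1 j Q x
      = ∑ j, -∫ x, Del Q x * d1 j (d1 j Q) x := Finset.sum_congr rfl (fun j _ => h j)
    _ = -∑ j, ∫ x, Del Q x * d1 j (d1 j Q) x := by rw [Finset.sum_neg_distrib]
    _ = -∫ x, ∑ j, Del Q x * d1 j (d1 j Q) x := by
        rw [integral_finset_sum _ (fun j _ => int_mul _ _)]
    _ = -∫ x, Del Q x * Del Q x := by
        refine neg_inj.mpr (integral_fun_congr (fun x => ?_))
        rw [Del_apply, Finset.mul_sum]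

lemma key1 (Q : 𝓢(𝔼, ℝ)) :
    ∫ x, Del (Del Q) x * Q x = ∫ x, Del Q x * Del Q x := by
  set D := Del Q with hD
  calc ∫ x, Del D x * Q x = ∫ x, ∑ j, d1 j (d1 j D) x * Q x := by
        congr 1; funext x; rw [Del_apply, Finset.sum_mul]
    _ = ∑ j, ∫ x, d1 j (d1 j D) x * Q x := integral_finset_sum _ (fun j _ => int_mul _ _)
    _ = ∑ j, ∫ x, D x * d1 j (d1 j Q) x := by
        refine Finset.sum_congr rfl (fun j _ => ?_)
        rw [ibp j (d1 j D) Q, ibp j D (d1 j Q), neg_neg]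
    _ = ∫ x, ∑ j, D x * d1 j (d1 j Q) x := (integral_finset_sum _ (fun j _ => int_mul _ _)).symm
    _ = ∫ x, D x * D x := by
        congr 1; funext x; rw [hD, Del_apply, Finset.mul_sum]

lemma delta_sum (j : Fin N) (v : Fin N → ℝ) : ∑ k, (ee N j) k * v k = v j := by
  have h : ∀ k, (ee N j) k * v k = if j = k then v k else 0 := fun k => by
    rw [proj_ee]; split <;> simp
  simp only [h]
  rw [Finset.sum_ite_eq]
  simp

lemma delta_sum' (k : Fin N) (v : Fin N → ℝ) : ∑ j, (ee N j) k * v j = v k := by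
  have h : ∀ j, (ee N j) k * v j = if j = k then v j else 0 := fun j => by
    rw [proj_ee]; split <;> simp
  simp only [h]
  rw [Finset.sum_ite_eq']
  simp

lemma sumB (a b : 𝓢(𝔼, ℝ)) :
    ∑ k, ∫ x, x k * (a x * d1 k b x)
      = -(N:ℝ) * (∫ x, a x * b x) - ∑ k, ∫ x, x k * (d1 k a x * b x) := by
  have h : ∀ k : Fin N, (∫ x, x k * (d1 k a x * b x)) + (∫ x, x k * (a x * d1 k b x))
      = -∫ x, a x * b x := by
    intro k
    rw [← integral_add (int_mul3 k (d1 k a) b) (int_mul3 k a (d1 k b)), ← ibp_x_mul k a b]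
    exact integral_fun_congr (fun x => by ring)
  have hsum : ∑ k : Fin N, ((∫ x, x k * (d1 k a x * b x)) + (∫ x, x k * (a x * d1 k b x)))
      = ∑ _k : Fin N, (-∫ x, a x * b x) := Finset.sum_congr rfl (fun k _ => h k)
  rw [Finset.sum_add_distrib, Finset.sum_const, Finset.card_univ, Fintype.card_fin,
    nsmul_eq_mul] at hsum
  linarith [hsum]

/-- the multiplier `x · ∇Q` as a Schwartz function -/
def PP (Q : 𝓢(𝔼, ℝ)) : 𝓢(𝔼, ℝ) := ∑ k, mulx k (d1 k Q)

lemma PP_apply (Q : 𝓢(𝔼, ℝ)) (x : 𝔼) : PP Q x = ∑ k, d1 k Q x * x k := by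
  rw [PP, ← coe_coeHom, map_sum]
  simp [coeHom, mulx_apply]

lemma rowA (Q : 𝓢(𝔼, ℝ)) (j : Fin N) :
    ∑ k, ∫ x, d1 j (d1 j (Del Q)) x * mulx k (d1 k Q) x
      = ((N:ℝ) - 1) * (∫ x, d1 j (Del Q) x * d1 j Q x)
        + ∑ k, ∫ x, x k * (d1 k (d1 j (Del Q)) x * d1 j Q x) := by
  set D := Del Q with hD
  have hA : ∀ k : Fin N, ∫ x, d1 j (d1 j D) x * mulx k (d1 k Q) x
      = -((ee N j) k * ∫ x, d1 j D x * d1 k Q x)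
        - ∫ x, x k * (d1 j D x * d1 k (d1 j Q) x) := by
    intro k
    rw [ibp j (d1 j D) (mulx k (d1 k Q))]
    have h1 : ∫ x, d1 j D x * d1 j (mulx k (d1 k Q)) x
        = ∫ x, ((ee N j) k * (d1 j D x * d1 k Q x) + x k * (d1 j D x * d1 k (d1 j Q) x)) := by
      refine integral_fun_congr (fun x => ?_)
      rw [d1_mulx, d1_comm j k Q]
      ring
    rw [h1, integral_add ((int_mul (d1 j D) (d1 k Q)).const_mul _) (int_mul3 k (d1 j D) _),
      integral_const_mul]
    ring
  rw [Finset.sum_congr rfl (fun k _ => hA k), Finset.sum_sub_distrib, Finset.sum_neg_distrib,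
    delta_sum j (fun k => ∫ x, d1 j D x * d1 k Q x),
    sumB (d1 j D) (d1 j Q)]
  ring

lemma colC (Q : 𝓢(𝔼, ℝ)) (k : Fin N) :
    ∑ j, ∫ x, x k * (d1 k (d1 j (Del Q)) x * d1 j Q x)
      = -(∫ x, d1 k (Del Q) x * d1 k Q x)
        - ∫ x, x k * (d1 k (Del Q) x * Del Q x) := by
  set D := Del Q with hD
  have hC : ∀ j : Fin N, ∫ x, x k * (d1 k (d1 j D) x * d1 j Q x)
      = -((ee N j) k * ∫ x, d1 k D x * d1 j Q x)
        - ∫ x, x k * (d1 k D x * d1 j (d1 j Q) x) := by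
    intro j
    have h0 : ∫ x, x k * (d1 k (d1 j D) x * d1 j Q x)
        = ∫ x, d1 j (d1 k D) x * mulx k (d1 j Q) x := by
      refine integral_fun_congr (fun x => ?_)
      rw [mulx_apply, d1_comm k j D]
      ring
    rw [h0, ibp j (d1 k D) (mulx k (d1 j Q))]
    have h1 : ∫ x, d1 k D x * d1 j (mulx k (d1 j Q)) x
        = ∫ x, ((ee N j) k * (d1 k D x * d1 j Q x) + x k * (d1 k D x * d1 j (d1 j Q) x)) := by
      refine integral_fun_congr (fun x => ?_)
      rw [d1_mulx]
      ring
    rw [h1, integral_add ((int_mul (d1 k D) (d1 j Q)).const_mul _) (int_mul3 k (d1 k D) _),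
      integral_const_mul]
    ring
  rw [Finset.sum_congr rfl (fun j _ => hC j), Finset.sum_sub_distrib, Finset.sum_neg_distrib,
    delta_sum' k (fun j => ∫ x, d1 k D x * d1 j Q x)]
  have h2 : ∑ j, ∫ x, x k * (d1 k D x * d1 j (d1 j Q) x)
      = ∫ x, x k * (d1 k D x * D x) := by
    rw [← integral_finset_sum _ (fun j _ => int_mul3 k (d1 k D) (d1 j (d1 j Q)))]
    refine integral_fun_congr (fun x => ?_)
    rw [hD, Del_apply, Finset.mul_sum, Finset.mul_sum]
  rw [h2]

lemma key2 (Q : 𝓢(𝔼, ℝ)) :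
    ∫ x, Del (Del Q) x * PP Q x
      = (2 - (N:ℝ)/2) * ∫ x, Del Q x * Del Q x := by
  have step1 : ∫ x, Del (Del Q) x * PP Q x
      = ∑ j, ∑ k, ∫ x, d1 j (d1 j (Del Q)) x * mulx k (d1 k Q) x := by
    have h1 : ∫ x, Del (Del Q) x * PP Q x
        = ∑ j, ∫ x, d1 j (d1 j (Del Q)) x * PP Q x := by
      rw [← integral_finset_sum _ (fun j _ => int_mul (d1 j (d1 j (Del Q))) (PP Q))]
      refine integral_fun_congr (fun x => ?_)
      rw [Del_apply, Finset.sum_mul]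
    rw [h1]
    refine Finset.sum_congr rfl (fun j _ => ?_)
    rw [← integral_finset_sum _ (fun k _ => int_mul (d1 j (d1 j (Del Q))) (mulx k (d1 k Q)))]
    refine integral_fun_congr (fun x => ?_)
    rw [PP_apply, Finset.mul_sum]
    refine Finset.sum_congr rfl (fun k _ => ?_)
    rw [mulx_apply]
  have hsum1 : ∑ j, ∑ k, (∫ x, d1 j (d1 j (Del Q)) x * mulx k (d1 k Q) x)
      = ∑ j, (((N:ℝ) - 1) * (∫ x, d1 j (Del Q) x * d1 j Q x)
        + ∑ k, ∫ x, x k * (d1 k (d1 j (Del Q)) x * d1 j Q x)) :=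
    Finset.sum_congr rfl (fun j _ => rowA Q j)
  have hsum2 : ∑ j, (((N:ℝ) - 1) * (∫ x, d1 j (Del Q) x * d1 j Q x)
        + ∑ k, ∫ x, x k * (d1 k (d1 j (Del Q)) x * d1 j Q x))
      = ((N:ℝ) - 1) * (∑ j, ∫ x, d1 j (Del Q) x * d1 j Q x)
        + ∑ j, ∑ k, ∫ x, x k * (d1 k (d1 j (Del Q)) x * d1 j Q x) := by
    rw [Finset.sum_add_distrib, ← Finset.mul_sum]
  have hswap : ∑ j, ∑ k, (∫ x, x k * (d1 k (d1 j (Del Q)) x * d1 j Q x))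
      = ∑ k, ∑ j, (∫ x, x k * (d1 k (d1 j (Del Q)) x * d1 j Q x)) := Finset.sum_comm
  have hcol : ∑ k, ∑ j, (∫ x, x k * (d1 k (d1 j (Del Q)) x * d1 j Q x))
      = ∑ k, (-(∫ x, d1 k (Del Q) x * d1 k Q x)
        - ∫ x, x k * (d1 k (Del Q) x * Del Q x)) :=
    Finset.sum_congr rfl (fun k _ => colC Q k)
  have hcol2 : ∑ k, (-(∫ x, d1 k (Del Q) x * d1 k Q x)
        - ∫ x, x k * (d1 k (Del Q) x * Del Q x))
      = -(∑ k, ∫ x, d1 k (Del Q) x * d1 k Q x)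
        - ∑ k, ∫ x, x k * (d1 k (Del Q) x * Del Q x) := by
    rw [Finset.sum_sub_distrib, Finset.sum_neg_distrib]
  have h3 : (2:ℝ) * ∑ k, (∫ x, x k * (d1 k (Del Q) x * Del Q x))
      = -(N:ℝ) * ∫ x, Del Q x * Del Q x := by
    have h4 : ∀ k : Fin N, (2:ℝ) * ∫ x, x k * (d1 k (Del Q) x * Del Q x)
        = -∫ x, Del Q x * Del Q x := by
      intro k
      rw [← ibp_x_mul' k (Del Q), ← integral_const_mul, ← integral_const_mul]
      exact integral_fun_congr (fun x => by ring)
    have h5 := Finset.sum_congr rfl (fun k (_ : k ∈ Finset.univ) => h4 k)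
    rw [← Finset.mul_sum] at h5
    rw [h5, Finset.sum_const, Finset.card_univ, Fintype.card_fin, nsmul_eq_mul]
    ring
  rw [step1, hsum1, hsum2, hswap, hcol, hcol2, cross Q]
  linear_combination (-(1:ℝ)/2) * h3

lemma keyQP (Q : 𝓢(𝔼, ℝ)) :
    ∫ x, Q x * PP Q x = -((N:ℝ)/2) * ∫ x, Q x * Q x := by
  have h1 : ∫ x, Q x * PP Q x = ∑ k, ∫ x, x k * (Q x * d1 k Q x) := by
    rw [← integral_finset_sum _ (fun k _ => int_mul3 k Q (d1 k Q))]
    refine integral_fun_congr (fun x => ?_)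
    rw [PP_apply, Finset.mul_sum]
    exact Finset.sum_congr rfl (fun k _ => by ring)
  have h4 : ∀ k : Fin N, (2:ℝ) * ∫ x, x k * (Q x * d1 k Q x) = -∫ x, Q x * Q x :=
    fun k => ibp_x_mul' k Q
  have h5 := Finset.sum_congr rfl (fun k (_ : k ∈ Finset.univ) => h4 k)
  rw [← Finset.mul_sum, Finset.sum_const, Finset.card_univ, Fintype.card_fin,
    nsmul_eq_mul] at h5
  rw [h1]
  linear_combination (1/2:ℝ) * h5

lemma abs_rpow_eq (t : ℝ) {r : ℝ} (hr : 0 < r) : |t| ^ r = (t ^ 2) ^ (r / 2) := by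
  rw [← sq_abs, ← Real.rpow_natCast |t| 2, ← Real.rpow_mul (abs_nonneg t)]
  rw [show ((2:ℕ):ℝ) * (r/2) = r by push_cast; ring]

lemma G_mul {p : ℝ} (hp : 1 < p) (t : ℝ) :
    (t ^ 2) ^ ((p - 1) / 2) * t * t = (t ^ 2) ^ ((p + 1) / 2) := by
  rw [show (p+1)/2 = (p-1)/2 + 1 by ring,
    Real.rpow_add' (sq_nonneg t) (by intro h; nlinarith), Real.rpow_one]
  ring

lemma G_hasDeriv {p : ℝ} (hp : 1 < p) (t : ℝ) :
    HasDerivAt (fun t : ℝ => (t ^ 2) ^ ((p + 1) / 2))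
      ((p + 1) * (t ^ 2) ^ ((p - 1) / 2) * t) t := by
  have h1 : HasDerivAt (fun t : ℝ => t ^ 2) (2 * t) t := by
    simpa using hasDerivAt_pow 2 t
  have h2 := (Real.hasDerivAt_rpow_const (x := t ^ 2) (p := (p + 1) / 2)
    (Or.inr (by linarith))).comp t h1
  refine h2.congr_deriv ?_
  rw [show (p+1)/2 - 1 = (p-1)/2 by ring]
  ring

section NL

variable {p : ℝ}

lemma GQ_hasFDeriv (hp : 1 < p) (Q : 𝓢(𝔼, ℝ)) (x : 𝔼) :
    HasFDerivAt (fun y : 𝔼 => (Q y ^ 2) ^ ((p + 1) / 2))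
      (((p + 1) * (Q x ^ 2) ^ ((p - 1) / 2) * Q x) • fderiv ℝ Q x) x :=
  (G_hasDeriv hp (Q x)).comp_hasFDerivAt x Q.differentiable.differentiableAt.hasFDerivAt

lemma GQ_fderiv_apply (hp : 1 < p) (Q : 𝓢(𝔼, ℝ)) (x : 𝔼) (k : Fin N) :
    fderiv ℝ (fun y : 𝔼 => (Q y ^ 2) ^ ((p + 1) / 2)) x (ee N k)
      = (p + 1) * ((Q x ^ 2) ^ ((p - 1) / 2) * Q x * d1 k Q x) := by
  rw [(GQ_hasFDeriv hp Q x).fderiv]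
  simp only [ContinuousLinearMap.coe_smul', Pi.smul_apply, smul_eq_mul]
  rw [d1_apply]
  ring

lemma GQ_bound (hp : 1 < p) (Q : 𝓢(𝔼, ℝ)) (x : 𝔼) : |(Q x ^ 2) ^ ((p + 1) / 2)| ≤ supB Q ^ p * |Q x| := by
  have h0 : (Q x ^ 2) ^ ((p + 1) / 2) = |Q x| ^ (p + 1) := (abs_rpow_eq _ (by linarith)).symm
  rw [h0, abs_of_nonneg (Real.rpow_nonneg (abs_nonneg _) _)]
  rw [show p + 1 = p + (1:ℝ) from rfl, Real.rpow_add' (abs_nonneg _) (by linarith),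
    Real.rpow_one]
  exact mul_le_mul_of_nonneg_right
    (Real.rpow_le_rpow (abs_nonneg _) (le_supB Q x) (by linarith)) (abs_nonneg _)

lemma GQ'_bound (hp : 1 < p) (Q : 𝓢(𝔼, ℝ)) (x : 𝔼) : |(Q x ^ 2) ^ ((p - 1) / 2) * Q x| ≤ supB Q ^ p := by
  have h0 : (Q x ^ 2) ^ ((p - 1) / 2) = |Q x| ^ (p - 1) := (abs_rpow_eq _ (by linarith)).symm
  rw [h0, abs_mul, abs_of_nonneg (Real.rpow_nonneg (abs_nonneg _) _)]
  calc |Q x| ^ (p - 1) * |Q x| = |Q x| ^ ((p - 1) + 1) := by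
        rw [Real.rpow_add' (abs_nonneg _) (by linarith), Real.rpow_one]
    _ = |Q x| ^ p := by norm_num
    _ ≤ supB Q ^ p := Real.rpow_le_rpow (abs_nonneg _) (le_supB Q x) (by linarith)

lemma GQ_cont (hp : 1 < p) (Q : 𝓢(𝔼, ℝ)) : Continuous (fun y : 𝔼 => (Q y ^ 2) ^ ((p + 1) / 2)) :=
  (Q.continuous.pow 2).rpow_const (fun x => Or.inr (by linarith))

lemma GQ'_cont (hp : 1 < p) (Q : 𝓢(𝔼, ℝ)) : Continuous (fun y : 𝔼 => (Q y ^ 2) ^ ((p - 1) / 2) * Q y) :=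
  ((Q.continuous.pow 2).rpow_const (fun x => Or.inr (by linarith))).mul Q.continuous

lemma int_GQ (hp : 1 < p) (Q : 𝓢(𝔼, ℝ)) : Integrable (fun y : 𝔼 => (Q y ^ 2) ^ ((p + 1) / 2)) := by
  refine integrable_dom Q 0 (GQ_cont hp Q) (supB Q ^ p) (fun x => ?_)
  rw [pow_zero, one_mul, Real.norm_eq_abs]
  exact GQ_bound hp Q x

lemma int_xGQ (hp : 1 < p) (Q : 𝓢(𝔼, ℝ)) (k : Fin N) : Integrable (fun x : 𝔼 => x k * (Q x ^ 2) ^ ((p + 1) / 2)) := by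
  refine integrable_dom Q 1 ((EuclideanSpace.proj (𝕜 := ℝ) k).continuous.mul
    (GQ_cont hp Q)) (supB Q ^ p) (fun x => ?_)
  rw [pow_one, Real.norm_eq_abs, abs_mul]
  calc |x k| * |(Q x ^ 2) ^ ((p + 1) / 2)| ≤ ‖x‖ * (supB Q ^ p * |Q x|) :=
        mul_le_mul (abs_coord_le x k) (GQ_bound hp Q x) (abs_nonneg _) (norm_nonneg _)
    _ = supB Q ^ p * (‖x‖ * |Q x|) := by ring

lemma int_GQ'_mul (hp : 1 < p) (Q : 𝓢(𝔼, ℝ)) (b : 𝓢(𝔼, ℝ)) :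
    Integrable (fun x : 𝔼 => (Q x ^ 2) ^ ((p - 1) / 2) * Q x * b x) := by
  refine integrable_dom b 0 ((GQ'_cont hp Q).mul b.continuous) (supB Q ^ p) (fun x => ?_)
  rw [pow_zero, one_mul, Real.norm_eq_abs, abs_mul]
  exact mul_le_mul_of_nonneg_right (GQ'_bound hp Q x) (abs_nonneg _)

lemma int_xGQ'_mul (hp : 1 < p) (Q : 𝓢(𝔼, ℝ)) (k : Fin N) (b : 𝓢(𝔼, ℝ)) :
    Integrable (fun x : 𝔼 => x k * ((Q x ^ 2) ^ ((p - 1) / 2) * Q x * b x)) := by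
  refine integrable_dom b 1 ((EuclideanSpace.proj (𝕜 := ℝ) k).continuous.mul
    ((GQ'_cont hp Q).mul b.continuous)) (supB Q ^ p) (fun x => ?_)
  rw [pow_one, Real.norm_eq_abs, abs_mul, abs_mul]
  calc |x k| * (|(Q x ^ 2) ^ ((p - 1) / 2) * Q x| * |b x|)
      ≤ ‖x‖ * (supB Q ^ p * |b x|) :=
        mul_le_mul (abs_coord_le x k)
          (mul_le_mul_of_nonneg_right (GQ'_bound hp Q x) (abs_nonneg _))
          (by positivity) (norm_nonneg _)
    _ = supB Q ^ p * (‖x‖ * |b x|) := by ring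

lemma key4 (hp : 1 < p) (Q : 𝓢(𝔼, ℝ)) :
    ∫ x, (Q x ^ 2) ^ ((p - 1) / 2) * Q x * PP Q x
      = -((N:ℝ) / (p + 1)) * ∫ x, (Q x ^ 2) ^ ((p + 1) / 2) := by
  have hk : ∀ k : Fin N, (p + 1) * ∫ x, x k * ((Q x ^ 2) ^ ((p - 1) / 2) * Q x * d1 k Q x)
      = -∫ x, (Q x ^ 2) ^ ((p + 1) / 2) := by
    intro k
    have h3 : Integrable (fun x : 𝔼 =>
        x k * fderiv ℝ (fun y : 𝔼 => (Q y ^ 2) ^ ((p + 1) / 2)) x (ee N k)) := by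
      refine ((int_xGQ'_mul hp Q k (d1 k Q)).const_mul (p+1)).congr ?_
      filter_upwards with x
      rw [GQ_fderiv_apply hp]
      ring
    have hibp := ibp_x k (fun x => (GQ_hasFDeriv hp Q x).differentiableAt)
      (int_GQ hp Q) (int_xGQ hp Q k) h3
    rw [← hibp, ← integral_const_mul]
    refine integral_fun_congr (fun x => ?_)
    rw [GQ_fderiv_apply hp]
    ring
  have h1 : ∫ x, (Q x ^ 2) ^ ((p - 1) / 2) * Q x * PP Q x
      = ∑ k, ∫ x, x k * ((Q x ^ 2) ^ ((p - 1) / 2) * Q x * d1 k Q x) := by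
    rw [← integral_finset_sum _ (fun k _ => int_xGQ'_mul hp Q k (d1 k Q))]
    refine integral_fun_congr (fun x => ?_)
    rw [PP_apply, Finset.mul_sum]
    exact Finset.sum_congr rfl (fun k _ => by ring)
  have hsum := Finset.sum_congr rfl (fun k (_ : k ∈ Finset.univ) => hk k)
  rw [← Finset.mul_sum, Finset.sum_const, Finset.card_univ, Fintype.card_fin,
    nsmul_eq_mul] at hsum
  rw [h1]
  have hp1 : p + 1 ≠ 0 := by linarith
  apply mul_left_cancel₀ hp1
  have hdiv : (p + 1) * ((N:ℝ) / (p + 1)) = N := by field_simp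
  linear_combination hsum + (∫ x, (Q x ^ 2) ^ ((p + 1) / 2)) * hdiv

end NL

lemma support_open {g : 𝔼 → ℝ} (hg : Continuous g) : IsOpen (Function.support g) := by
  have : Function.support g = g ⁻¹' ({0}ᶜ) := by
    ext x; simp [Function.mem_support]
  rw [this]
  exact hg.isOpen_preimage _ isOpen_compl_singleton

lemma int_sq_pos (Q : 𝓢(𝔼, ℝ)) (hQne : Q ≠ 0) : 0 < ∫ x, Q x * Q x := by
  rw [integral_pos_iff_support_of_nonneg (fun x => mul_self_nonneg (Q x)) (int_mul Q Q)]
  obtain ⟨x0, hx0⟩ : ∃ x, Q x ≠ 0 := by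
    by_contra h
    push_neg at h
    exact hQne (DFunLike.ext _ _ (fun x => by rw [h x]; rfl))
  exact (support_open (Q.continuous.mul Q.continuous)).measure_pos volume
    ⟨x0, Function.mem_support.mpr (mul_self_ne_zero.mpr hx0)⟩

lemma int_GQ_pos {p : ℝ} (hp : 1 < p) (Q : 𝓢(𝔼, ℝ)) (hQne : Q ≠ 0) :
    0 < ∫ x, (Q x ^ 2) ^ ((p + 1) / 2) := by
  rw [integral_pos_iff_support_of_nonneg
    (fun x => Real.rpow_nonneg (sq_nonneg _) _) (int_GQ hp Q)]
  obtain ⟨x0, hx0⟩ : ∃ x, Q x ≠ 0 := by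
    by_contra h
    push_neg at h
    exact hQne (DFunLike.ext _ _ (fun x => by rw [h x]; rfl))
  refine (support_open (GQ_cont hp Q)).measure_pos volume ⟨x0, ?_⟩
  simp only [Function.mem_support]
  intro hcon
  rw [Real.rpow_eq_zero_iff_of_nonneg (sq_nonneg _)] at hcon
  exact hx0 (pow_eq_zero_iff (by norm_num)|>.mp hcon.1)

lemma final_algebra {p σ t e u m d C x₁ β : ℝ}
    (hp : 1 < p) (hσ : 2 < σ) (ht : 0 < t) (he : 0 < e)
    (hu : u = (p + 1) / σ * e)
    (hm : m = t ^ ((1:ℝ)/2)) (hd : d = e ^ ((1:ℝ)/2))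
    (hC : C = (p + 1) / σ * m ^ (σ - p - 1) * d ^ (2 - σ))
    (hβ : β = (p + 1 - σ) / (σ - 2)) (hx₁ : x₁ = m ^ β * d) :
    x₁ - C / (p + 1) * (σ * x₁ ^ (σ - 1)) = 0 ∧
    x₁ ^ 2 / 2 - C / (p + 1) * x₁ ^ σ = t ^ β * (1 / 2 * e - 1 / (p + 1) * u) ∧
    x₁ ^ 2 / 2 - C / (p + 1) * x₁ ^ σ = (1 / 2 - 1 / σ) * x₁ ^ 2 := by
  have hσ0 : (0:ℝ) < σ := by linarith
  have hσ2 : σ - 2 ≠ 0 := ne_of_gt (by linarith)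
  have hp1 : p + 1 ≠ 0 := by positivity
  have hm0 : 0 < m := hm ▸ Real.rpow_pos_of_pos ht _
  have hd0 : 0 < d := hd ▸ Real.rpow_pos_of_pos he _
  have hβkey : β * (σ - 2) = p + 1 - σ := by rw [hβ]; field_simp
  have hxr : ∀ r : ℝ, x₁ ^ r = m ^ (β * r) * d ^ r := by
    intro r
    rw [hx₁, Real.mul_rpow (Real.rpow_nonneg hm0.le β) hd0.le, ← Real.rpow_mul hm0.le]
  have hCp : C / (p + 1) = 1/σ * (m ^ (σ - p - 1) * d ^ (2 - σ)) := by
    rw [hC]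
    field_simp
  have em : ∀ a b : ℝ, m ^ (a:ℝ) * m ^ (b:ℝ) = m ^ (a+b) := fun a b =>
    (Real.rpow_add hm0 a b).symm
  have ed : ∀ a b : ℝ, d ^ (a:ℝ) * d ^ (b:ℝ) = d ^ (a+b) := fun a b =>
    (Real.rpow_add hd0 a b).symm
  have hx2 : x₁ ^ 2 = m ^ (β * 2) * d ^ (2:ℝ) := by
    calc x₁ ^ 2 = x₁ ^ ((2:ℕ):ℝ) := (Real.rpow_natCast x₁ 2).symm
      _ = x₁ ^ (2:ℝ) := by norm_num
      _ = m ^ (β * 2) * d ^ (2:ℝ) := hxr 2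
  have h1 : C / (p + 1) * (σ * x₁ ^ (σ - 1)) = x₁ := by
    rw [hCp, hxr (σ - 1),
      show 1/σ * (m ^ (σ-p-1) * d ^ (2-σ)) * (σ * (m ^ (β*(σ-1)) * d ^ (σ-1)))
        = (σ * (1/σ)) * ((m ^ (σ-p-1) * m ^ (β*(σ-1))) * (d ^ (2-σ) * d ^ (σ-1))) by ring,
      em, ed, mul_one_div, div_self hσ0.ne', one_mul,
      show σ - p - 1 + β*(σ-1) = β by linear_combination hβkey,
      show (2-σ) + (σ-1) = (1:ℝ) by ring, Real.rpow_one, ← hx₁]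
  have h2 : C / (p + 1) * x₁ ^ σ = 1/σ * x₁ ^ 2 := by
    rw [hCp, hxr σ,
      show 1/σ * (m ^ (σ-p-1) * d ^ (2-σ)) * (m ^ (β*σ) * d ^ σ)
        = 1/σ * ((m ^ (σ-p-1) * m ^ (β*σ)) * (d ^ (2-σ) * d ^ σ)) by ring,
      em, ed,
      show σ - p - 1 + β*σ = β * 2 by linear_combination hβkey,
      show (2-σ) + σ = (2:ℝ) by ring, hx2]
  have htβ : t ^ β = m ^ (β * 2) := by
    rw [hm, ← Real.rpow_mul ht.le]
    congr 1
    ring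
  have hde : d ^ (2:ℝ) = e := by
    rw [hd, ← Real.rpow_mul he.le]
    norm_num
  have h3 : t ^ β * (1 / 2 * e - 1 / (p + 1) * u) = (1/2 - 1/σ) * x₁ ^ 2 := by
    rw [hu, hx2, htβ, hde]
    field_simp
  refine ⟨by rw [h1]; ring, ?_, by rw [h2]; ring⟩
  rw [h2, h3]
  ring

end PSAux

open PSAux in
/-- With `f(x) = x²/2 - (C_GN/(p+1)) x^{N(p-1)/4}` and
`x₁ = ‖Q‖_2^{(2-s_c)/s_c} ‖ΔQ‖_2`, one has `f'(x₁) = 0` and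
`f(x₁) = M(Q)^{(2-s_c)/s_c} E(Q) = ((N(p-1)-8)/(2N(p-1))) x₁²`. -/
theorem critical_point_of_f (N : ℕ) (hN : 1 ≤ N) (p : ℝ)
    (hp1 : 1 + 8 / (N : ℝ) < p) (hp2 : 5 ≤ N → p < 1 + 8 / ((N : ℝ) - 4))
    (s_c : ℝ) (hs : s_c = (N : ℝ) / 2 - 4 / (p - 1))
    (Q : SchwartzMap (EuclideanSpace ℝ (Fin N)) ℝ) (hQne : Q ≠ 0)
    (hQ : ∀ x, laplacian (laplacian (⇑Q)) x + (2 - s_c) * Q x - |Q x| ^ (p - 1) * Q x = 0)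
    (m d : ℝ)
    (hm : m = (∫ x, |Q x| ^ 2) ^ ((1 : ℝ) / 2))
    (hd : d = (∫ x, |laplacian (⇑Q) x| ^ 2) ^ ((1 : ℝ) / 2))
    (C_GN : ℝ)
    (hC : C_GN = (4 * (p + 1) / ((N : ℝ) * (p - 1))) *
        m ^ (-(p + 1 - (N : ℝ) * (p - 1) / 4)) * d ^ (-((N : ℝ) * (p - 1) / 4 - 2)))
    (f : ℝ → ℝ)
    (hf : ∀ x, f x = x ^ 2 / 2 - (C_GN / (p + 1)) * x ^ ((N : ℝ) * (p - 1) / 4))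
    (x₁ : ℝ) (hx₁ : x₁ = m ^ ((2 - s_c) / s_c) * d) :
    deriv f x₁ = 0 ∧
    f x₁ = ((∫ x, |Q x| ^ 2) ^ ((2 - s_c) / s_c)) *
        ((1 / 2) * (∫ x, |laplacian (⇑Q) x| ^ 2) - (1 / (p + 1)) * ∫ x, |Q x| ^ (p + 1)) ∧
    f x₁ = (((N : ℝ) * (p - 1) - 8) / (2 * (N : ℝ) * (p - 1))) * x₁ ^ 2 := by
  have hN0 : (0:ℝ) < N := by exact_mod_cast hN
  have hp : 1 < p := by
    have h0 : 0 < 8 / (N:ℝ) := by positivity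
    linarith
  have hp1' : (0:ℝ) < p - 1 := by linarith
  have h8 : 8 < (N:ℝ) * (p - 1) := by
    have h1 : 8 / (N:ℝ) < p - 1 := by linarith
    have h2 := (div_lt_iff₀ hN0).mp h1
    nlinarith
  set σ : ℝ := (N:ℝ) * (p - 1) / 4 with hσdef
  have hσ : 2 < σ := by rw [hσdef]; linarith
  have hσ0 : σ ≠ 0 := by positivity
  -- pointwise form of the equation
  have hpt : ∀ x, Del (Del Q) x
      = (Q x ^ 2) ^ ((p - 1) / 2) * Q x - (2 - s_c) * Q x := by
    intro x
    have h := hQ x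
    rw [lap_eq Q, lap_eq (Del Q)] at h
    have habs : |Q x| ^ (p - 1) = (Q x ^ 2) ^ ((p - 1) / 2) :=
      abs_rpow_eq (Q x) (by linarith)
    rw [habs] at h
    linarith
  -- the three basic integrals
  set t : ℝ := ∫ x, Q x * Q x with ht_def
  set e : ℝ := ∫ x, Del Q x * Del Q x with he_def
  set u : ℝ := ∫ x, (Q x ^ 2) ^ ((p + 1) / 2) with hu_def
  have ht : 0 < t := int_sq_pos Q hQne
  have hu0 : 0 < u := int_GQ_pos hp Q hQne
  -- identity (I)
  have heq1 : e = u - (2 - s_c) * t := by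
    calc e = ∫ x, Del (Del Q) x * Q x := (key1 Q).symm
      _ = ∫ x, ((Q x ^ 2) ^ ((p + 1) / 2) - (2 - s_c) * (Q x * Q x)) :=
        integral_fun_congr (fun x => by rw [hpt x, ← G_mul hp (Q x)]; ring)
      _ = u - (2 - s_c) * t := by
        rw [integral_sub (int_GQ hp Q) ((int_mul Q Q).const_mul _), integral_const_mul]
  -- identity (II)
  have heq2 : (2 - (N:ℝ)/2) * e
      = -((N:ℝ)/(p+1)) * u - (2 - s_c) * (-((N:ℝ)/2) * t) := by
    calc (2 - (N:ℝ)/2) * e = ∫ x, Del (Del Q) x * PP Q x := (key2 Q).symm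
      _ = ∫ x, ((Q x ^ 2) ^ ((p - 1) / 2) * Q x * PP Q x - (2 - s_c) * (Q x * PP Q x)) :=
        integral_fun_congr (fun x => by rw [hpt x]; ring)
      _ = (∫ x, (Q x ^ 2) ^ ((p - 1) / 2) * Q x * PP Q x)
          - (2 - s_c) * ∫ x, Q x * PP Q x := by
        rw [integral_sub (int_GQ'_mul hp Q (PP Q)) ((int_mul Q (PP Q)).const_mul _),
          integral_const_mul]
      _ = -((N:ℝ)/(p+1)) * u - (2 - s_c) * (-((N:ℝ)/2) * t) := by
        rw [key4 hp Q, keyQP Q]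
  -- Pohozaev consequence
  have hp1ne : p + 1 ≠ 0 := by positivity
  have hue' : (N:ℝ) * (p - 1) * u = 4 * (p + 1) * e := by
    have h2' : (p + 1) * ((2 - (N:ℝ)/2) * e)
        = -(N:ℝ) * u + (2 - s_c) * ((N:ℝ)/2) * t * (p + 1) := by
      rw [heq2]
      field_simp
      ring
    linear_combination (-(p+1) * (N:ℝ)) * heq1 + (-2) * h2'
  have he : 0 < e := by
    have h1 : 0 < (N:ℝ) * (p - 1) * u := by positivity
    rw [hue'] at h1
    nlinarith
  have hueσ : u = (p + 1) / σ * e := by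
    rw [div_mul_eq_mul_div, eq_div_iff hσ0, hσdef]
    linarith [hue']
  -- rewrite the given integrals
  have hQ2 : (∫ x, |Q x| ^ 2) = t := integral_fun_congr (fun x => by rw [sq_abs, pow_two])
  have hD2 : (∫ x, |laplacian (⇑Q) x| ^ 2) = e := by
    rw [lap_eq Q]
    exact integral_fun_congr (fun x => by rw [sq_abs, pow_two])
  have hup : (∫ x, |Q x| ^ (p + 1)) = u :=
    integral_fun_congr (fun x => abs_rpow_eq (Q x) (by linarith))
  have hm' : m = t ^ ((1:ℝ)/2) := by rw [hm, hQ2]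
  have hd' : d = e ^ ((1:ℝ)/2) := by rw [hd, hD2]
  -- put the constant in normal form
  have hCval : C_GN = (p + 1) / σ * m ^ (σ - p - 1) * d ^ (2 - σ) := by
    have c1 : 4 * (p + 1) / ((N:ℝ) * (p - 1)) = (p + 1) / σ := by
      rw [hσdef]
      have hNp : (N:ℝ) * (p - 1) ≠ 0 := by positivity
      field_simp
    rw [hC, show -(p + 1 - σ) = σ - p - 1 by ring, show -(σ - 2) = 2 - σ by ring, c1]
  have hβeq : (2 - s_c) / s_c = (p + 1 - σ) / (σ - 2) := by
    have hsc : s_c = 2 * (σ - 2) / (p - 1) := by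
      rw [hs, hσdef]
      field_simp
      ring
    have hσ2 : σ - 2 ≠ 0 := ne_of_gt (by linarith)
    rw [hsc]
    field_simp
    ring
  obtain ⟨F1, F2, F3⟩ := final_algebra hp hσ ht he hueσ hm' hd' hCval hβeq hx₁
  have hm0 : 0 < m := hm' ▸ Real.rpow_pos_of_pos ht _
  have hd0 : 0 < d := hd' ▸ Real.rpow_pos_of_pos he _
  have hx₁pos : 0 < x₁ := hx₁ ▸ mul_pos (Real.rpow_pos_of_pos hm0 _) hd0
  refine ⟨?_, ?_, ?_⟩
  · -- derivative vanishes
    have hfun : f = fun y : ℝ => y ^ 2 / 2 - C_GN / (p + 1) * y ^ σ := funext hf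
    have h1 : HasDerivAt (fun y : ℝ => y ^ 2 / 2) x₁ x₁ := by
      simpa using (hasDerivAt_pow 2 x₁).div_const 2
    have h2 : HasDerivAt (fun y : ℝ => y ^ σ) (σ * x₁ ^ (σ - 1)) x₁ :=
      Real.hasDerivAt_rpow_const (Or.inl hx₁pos.ne')
    have hder : HasDerivAt (fun y : ℝ => y ^ 2 / 2 - C_GN / (p + 1) * y ^ σ)
        (x₁ - C_GN / (p + 1) * (σ * x₁ ^ (σ - 1))) x₁ := h1.sub (h2.const_mul _)
    rw [← hfun] at hder
    rw [hder.deriv]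
    exact F1
  · rw [hf x₁, hQ2, hD2, hup]
    calc x₁ ^ 2 / 2 - C_GN / (p + 1) * x₁ ^ σ
        = t ^ ((2 - s_c) / s_c) * (1 / 2 * e - 1 / (p + 1) * u) := F2
      _ = t ^ ((2 - s_c) / s_c) * (1 / 2 * e - 1 / (p + 1) * u) := rfl
  · rw [hf x₁]
    calc x₁ ^ 2 / 2 - C_GN / (p + 1) * x₁ ^ σ = (1 / 2 - 1 / σ) * x₁ ^ 2 := F3
      _ = ((N:ℝ) * (p - 1) - 8) / (2 * (N:ℝ) * (p - 1)) * x₁ ^ 2 := by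
        have hNp : (N:ℝ) * (p - 1) ≠ 0 := by positivity
        rw [hσdef]
        congr 1
        field_simp
        ring
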